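/- Let V be an infinite-dimensional vector space over a field F and let α be a cardinal with ℵ₀ < α ≤ dim_F V. Then the ideal I_α of gl(V) satisfies I_α = [I_α, I_α], i.e., every linear transformation of rank < α is a sum of commutators [φ, ψ] with φ, ψ ∈ I_α. -/

import Mathlib

open Cardinal

universe u v

section Helpers

/-- If `rank M ≤ rank Y` then `M` embeds in `Y` as a direct summand. -/
theorem exists_split_embedding {F : Type u} {M Y : Type v} [Field F] [AddCommGroup M] [Module F M]
    [AddCommGroup Y] [Module F Y] (h : Module.rank F M ≤ Module.rank F Y) :
    ∃ (g : M →ₗ[F] Y) (π : Y →ₗ[F] M), π.comp g = LinearMap.id := by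
  let bM := Module.Basis.ofVectorSpace F M
  let bY := Module.Basis.ofVectorSpace F Y
  have hc : #(Module.Basis.ofVectorSpaceIndex F M) ≤ #(Module.Basis.ofVectorSpaceIndex F Y) := by
    rwa [bM.mk_eq_rank'', bY.mk_eq_rank'']
  obtain ⟨j⟩ := Cardinal.le_def _ _ |>.mp hc
  let g0 : M →ₗ[F] Y :=
    (bY.repr.symm.toLinearMap.comp (Finsupp.lmapDomain F F j)).comp bM.repr.toLinearMap
  have hg0 : Function.Injective g0 := by
    apply Function.Injective.comp (g := bY.repr.symm.toLinearMap ∘ Finsupp.lmapDomain F F j)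
    · apply Function.Injective.comp (g := bY.repr.symm.toLinearMap)
      · exact bY.repr.symm.injective
      · exact Finsupp.mapDomain_injective j.injective
    · exact bM.repr.injective
  obtain ⟨π, hπ⟩ := g0.exists_leftInverse_of_injective (LinearMap.ker_eq_bot.mpr hg0)
  exact ⟨g0, π, hπ⟩

end Helpers

variable (F V : Type*) [Field F] [AddCommGroup V] [Module F V]

/-- The ideal `I_α` of endomorphisms of rank `< α` (for an infinite cardinal `α`),
as a subspace of `End F V`. -/
def rankIdeal (α : Cardinal) (hα : ℵ₀ ≤ α) : Submodule F (Module.End F V) where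
  carrier := {φ | LinearMap.rank φ < α}
  zero_mem' := by
    simp only [Set.mem_setOf_eq, LinearMap.rank_zero]
    exact lt_of_lt_of_le aleph0_pos hα
  add_mem' := fun hf hg =>
    lt_of_le_of_lt (LinearMap.rank_add_le _ _) (Cardinal.add_lt_of_lt hα hf hg)
  smul_mem' := by
    intro c f hf
    have h1 : LinearMap.range (c • f) ≤ LinearMap.range f := by
      rintro x ⟨y, rfl⟩
      exact ⟨c • y, by simp⟩
    exact lt_of_le_of_lt (Submodule.rank_mono h1) hf

set_option maxHeartbeats 2000000 in
/-- For `ℵ₀ < α ≤ dim V`, the ideal `I_α` is spanned by commutators of its elements. -/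
theorem rankIdeal_eq_commutator_span (α : Cardinal) (hα : ℵ₀ < α) (hα' : α ≤ Module.rank F V) :
    rankIdeal F V α hα.le =
      Submodule.span F {x : Module.End F V | ∃ φ ψ : Module.End F V,
        φ ∈ rankIdeal F V α hα.le ∧ ψ ∈ rankIdeal F V α hα.le ∧ x = φ * ψ - ψ * φ} := by
  apply le_antisymm
  · intro φ hφ
    have hrank : LinearMap.rank φ < α := hφ
    -- a complement of the kernel
    obtain ⟨C, hC⟩ := (LinearMap.ker φ).exists_isCompl
    have hCrank : Module.rank F C < α := by
      have e1 := (Submodule.quotientEquivOfIsCompl _ _ hC).rank_eq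
      have e2 := φ.quotKerEquivRange.rank_eq
      have : Module.rank F C = LinearMap.rank φ := by
        rw [← e1, e2]
      rwa [this]
    set W : Submodule F V := C ⊔ LinearMap.range φ with hWdef
    have hWrank : Module.rank F W < α :=
      (Submodule.rank_add_le_rank_add_rank C _).trans_lt
        (Cardinal.add_lt_of_lt hα.le hCrank hrank)
    have hmapsW : ∀ x : V, φ x ∈ W := fun x =>
      (le_sup_right : LinearMap.range φ ≤ W) (LinearMap.mem_range_self φ x)
    let φ₀ : W →ₗ[F] W := φ.restrict (fun x _ => hmapsW x)
    -- a complement Y of W contained in the kernel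
    set K : Submodule F V := LinearMap.ker φ with hKdef
    set p : Submodule F K := (W ⊓ K).comap K.subtype with hpdef
    obtain ⟨q, hpq⟩ := p.exists_isCompl
    set Y : Submodule F V := q.map K.subtype with hYdef
    have hYK : Y ≤ K := Submodule.map_subtype_le _ _
    have hWY : IsCompl W Y := by
      constructor
      · rw [Submodule.disjoint_def]
        intro x hxW hxY
        obtain ⟨x', hx'q, rfl⟩ := hxY
        have hx'p : x' ∈ p := by
          rw [hpdef, Submodule.mem_comap]
          exact ⟨hxW, x'.2⟩
        have : x' = 0 := Submodule.disjoint_def.mp hpq.disjoint x' hx'p hx'q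
        rw [this]; rfl
      · have hmap : p.map K.subtype = W ⊓ K := by
          rw [hpdef, Submodule.map_comap_subtype]
          exact inf_eq_right.mpr inf_le_right
        have h1 : (W ⊓ K) ⊔ Y = K := by
          rw [← hmap, hYdef, ← Submodule.map_sup, hpq.codisjoint.eq_top, Submodule.map_top,
            Submodule.range_subtype]
        rw [codisjoint_iff, eq_top_iff, ← hC.codisjoint.eq_top]
        apply sup_le
        · exact le_trans (by rw [← h1]; exact sup_le (le_trans inf_le_left le_sup_left) le_sup_right)
            le_rfl
        · exact le_trans le_sup_left le_sup_left
    -- rank of Y is big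
    have hsum : Module.rank F W + Module.rank F Y = Module.rank F V := by
      have h2 := Submodule.rank_sup_add_rank_inf_eq W Y
      rw [hWY.codisjoint.eq_top, hWY.disjoint.eq_bot, rank_top, rank_bot, add_zero] at h2
      exact h2.symm
    have hYα : α ≤ Module.rank F Y := by
      by_contra hcon
      push_neg at hcon
      have := Cardinal.add_lt_of_lt hα.le hWrank hcon
      rw [hsum] at this
      exact absurd hα' this.not_ge
    have hrk : Module.rank F (ℕ →₀ W) ≤ Module.rank F Y := by
      have : Module.rank F (ℕ →₀ W) = ℵ₀ * Module.rank F W := by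
        simp [rank_finsupp]
      rw [this]
      exact le_trans (Cardinal.mul_lt_of_lt hα.le hα hWrank).le hYα
    obtain ⟨g, π, hgπ⟩ := exists_split_embedding (F := F) hrk
    have hπg : ∀ x, π (g x) = x := fun x => LinearMap.congr_fun hgπ x
    -- projections
    set pW : V →ₗ[F] W := W.projectionOnto Y hWY with hpW
    set pY : V →ₗ[F] Y := Y.projectionOnto W hWY.symm with hpY
    have hdecomp : ∀ v : V, (pW v : V) + (pY v : V) = v := fun v =>
      Submodule.projection_add_projection_eq_self hWY v
    -- shift operators
    set down : (ℕ →₀ W) →ₗ[F] (ℕ →₀ W) := Finsupp.lcomapDomain Nat.succ Nat.succ_injective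
      with hdown
    set up : (ℕ →₀ W) →ₗ[F] (ℕ →₀ W) := Finsupp.lmapDomain W F Nat.succ with hup
    set Dh : (ℕ →₀ W) →ₗ[F] (ℕ →₀ W) := Finsupp.mapRange.linearMap φ₀ with hDh
    have down_apply : ∀ (f : ℕ →₀ W) (n : ℕ), (down f) n = f (n + 1) := fun f n => rfl
    have up_apply0 : ∀ f : ℕ →₀ W, (up f) 0 = 0 := fun f =>
      Finsupp.mapDomain_notin_range f 0 (by simp [Nat.succ_ne_zero])
    have up_apply : ∀ (f : ℕ →₀ W) (n : ℕ), (up f) (n + 1) = f n := fun f n =>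
      Finsupp.mapDomain_apply Nat.succ_injective f n
    have Dh_apply : ∀ (f : ℕ →₀ W) (n : ℕ), (Dh f) n = φ₀ (f n) := fun f n => rfl
    have down_up : ∀ f : ℕ →₀ W, down (up f) = f := by
      intro f; ext n; rw [down_apply, up_apply]
    have down_Dh : ∀ f : ℕ →₀ W, down (Dh f) = Dh (down f) := by
      intro f; ext n; rw [down_apply, Dh_apply, Dh_apply, down_apply]
    -- the two operators
    set G : (ℕ →₀ W) →ₗ[F] V :=
      W.subtype.comp (Finsupp.lapply 0) + (Y.subtype.comp g).comp down with hG
    set Pi : V →ₗ[F] (ℕ →₀ W) := (Finsupp.lsingle 0).comp pW + (up.comp π).comp pY with hPi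
    have G_apply : ∀ f : ℕ →₀ W, G f = (f 0 : V) + (g (down f) : V) := fun f => rfl
    have Pi_apply : ∀ v : V, Pi v = Finsupp.single 0 (pW v) + up (π (pY v)) := fun v => rfl
    have pW_G : ∀ f : ℕ →₀ W, pW (G f) = f 0 := by
      intro f
      rw [G_apply, map_add, hpW]
      rw [Submodule.projectionOnto_apply_left hWY (f 0),
        Submodule.projectionOnto_apply_of_mem_right hWY (g (down f)).2, add_zero]
    have pY_G : ∀ f : ℕ →₀ W, pY (G f) = g (down f) := by
      intro f
      rw [G_apply, map_add, hpY]
      rw [Submodule.projectionOnto_apply_of_mem_right hWY.symm (f 0).2,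
        Submodule.projectionOnto_apply_left hWY.symm (g (down f)), zero_add]
    have PiG : ∀ f : ℕ →₀ W, Pi (G f) = f := by
      intro f
      rw [Pi_apply, pW_G, pY_G, hπg]
      ext n
      cases n with
      | zero =>
        rw [Finsupp.add_apply, Finsupp.single_eq_same, up_apply0, add_zero]
      | succ n =>
        rw [Finsupp.add_apply, Finsupp.single_eq_of_ne (by simp), up_apply, down_apply, zero_add]
    set A : Module.End F V := (G.comp down).comp Pi with hA
    set B : Module.End F V := (G.comp (up.comp Dh)).comp Pi with hB
    have hcomm : φ = A * B - B * A := by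
      ext v
      have hAB : (A * B) v = G (Dh (Pi v)) := by
        show A (B v) = _
        have : B v = G (up (Dh (Pi v))) := rfl
        rw [this]
        show G (down (Pi (G (up (Dh (Pi v)))))) = _
        rw [PiG, down_up]
      have hBA : (B * A) v = G (up (Dh (down (Pi v)))) := by
        show B (A v) = _
        have : A v = G (down (Pi v)) := rfl
        rw [this]
        show G (up (Dh (Pi (G (down (Pi v)))))) = _
        rw [PiG]
      have key : G (Dh (Pi v)) - G (up (Dh (down (Pi v)))) = φ v := by
        set f := Pi v with hf
        rw [G_apply, G_apply, down_Dh, down_up, up_apply0]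
        have hf0 : f 0 = pW v := by
          rw [hf, Pi_apply, Finsupp.add_apply, Finsupp.single_eq_same, up_apply0, add_zero]
        rw [Dh_apply, hf0]
        have h1 : ((φ₀ (pW v) : W) : V) = φ (pW v : V) :=
          LinearMap.restrict_coe_apply φ _ _
        have h2 : φ v = φ (pW v : V) := by
          conv_lhs => rw [← hdecomp v]
          rw [map_add, (show φ ((pY v : V)) = 0 from hYK (pY v).2), add_zero]
        rw [h1, ← h2]
        abel_nf
        simp
      rw [LinearMap.sub_apply, hAB, hBA, key]
    -- ranks of A and B
    have hrkN : Module.rank F (ℕ →₀ W) < α := by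
      have : Module.rank F (ℕ →₀ W) = ℵ₀ * Module.rank F W := by simp [rank_finsupp]
      rw [this]
      exact Cardinal.mul_lt_of_lt hα.le hα hWrank
    have hmemA : A ∈ rankIdeal F V α hα.le := by
      show LinearMap.rank A < α
      rw [hA]
      have h1 : LinearMap.rank ((G.comp down).comp Pi) ≤ LinearMap.rank (G.comp down) :=
        LinearMap.rank_comp_le_left Pi (G.comp down)
      have h2 : LinearMap.rank (G.comp down) ≤ LinearMap.rank G :=
        LinearMap.rank_comp_le_left down G
      have h3 : LinearMap.rank G ≤ Module.rank F (ℕ →₀ W) := LinearMap.rank_le_domain G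
      exact ((h1.trans h2).trans h3).trans_lt hrkN
    have hmemB : B ∈ rankIdeal F V α hα.le := by
      show LinearMap.rank B < α
      rw [hB]
      have h1 : LinearMap.rank ((G.comp (up.comp Dh)).comp Pi) ≤
          LinearMap.rank (G.comp (up.comp Dh)) :=
        LinearMap.rank_comp_le_left Pi (G.comp (up.comp Dh))
      have h2 : LinearMap.rank (G.comp (up.comp Dh)) ≤ LinearMap.rank G :=
        LinearMap.rank_comp_le_left (up.comp Dh) G
      have h3 : LinearMap.rank G ≤ Module.rank F (ℕ →₀ W) := LinearMap.rank_le_domain G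
      exact ((h1.trans h2).trans h3).trans_lt hrkN
    exact Submodule.subset_span ⟨A, B, hmemA, hmemB, hcomm⟩
  · rw [Submodule.span_le]
    rintro x ⟨ψ₁, ψ₂, h1, h2, rfl⟩
    have m1 : ψ₁ * ψ₂ ∈ rankIdeal F V α hα.le := by
      show LinearMap.rank (ψ₁ * ψ₂) < α
      exact lt_of_le_of_lt (LinearMap.rank_comp_le_left ψ₂ ψ₁) h1
    have m2 : ψ₂ * ψ₁ ∈ rankIdeal F V α hα.le := by
      show LinearMap.rank (ψ₂ * ψ₁) < α
      exact lt_of_le_of_lt (LinearMap.rank_comp_le_left ψ₁ ψ₂) h2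
    exact sub_mem m1 m2
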